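/- Let X be a compact perfect metric space and f: X → X an infinitesimal similitude on X with (Df)(x) > 0 for all x ∈ X. Then for every c > 1 there exists δ > 0 such that for all x, y ∈ X with 0 < d(x,y) < δ, c⁻¹ (Df)(x) ≤ d(f(x),f(y))/d(x,y) ≤ c (Df)(x). -/
import Mathlib


open Filter Topology

def IsInfSim {X Y : Type*} [MetricSpace X] [MetricSpace Y] (f : X → Y) (x : X) (L : ℝ) : Prop :=
  ∀ u v : ℕ → X, (∀ n, u n ≠ v n) →
    Tendsto u atTop (𝓝 x) → Tendsto v atTop (𝓝 x) →
    Tendsto (fun n => dist (f (u n)) (f (v n)) / dist (u n) (v n)) atTop (𝓝 L)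

lemma isInfSim_approx {X : Type*} [MetricSpace X]
    (hperf : ∀ x : X, (𝓝[≠] x).NeBot)
    (f : X → X) (Df : X → ℝ) (h : ∀ x : X, IsInfSim f x (Df x)) :
    ∀ (z : X) (ε : ℝ), 0 < ε → ∃ u : X, u ≠ z ∧ dist u z < ε ∧
      |dist (f u) (f z) / dist u z - Df z| < ε := by
  intro z ε hε
  have hw : ∀ k : ℕ, ∃ u : X, u ≠ z ∧ dist u z < 1 / (k + 1) := by
    intro k
    have hb : Metric.ball z (1 / (k + 1)) ∈ 𝓝[≠] z :=
      nhdsWithin_le_nhds (Metric.ball_mem_nhds z (by positivity))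
    have := (hperf z)
    obtain ⟨u, hu1, hu2⟩ := Filter.nonempty_of_mem (Filter.inter_mem self_mem_nhdsWithin hb)
    exact ⟨u, hu1, hu2⟩
  choose w hwne hwd using hw
  have hwt : Tendsto w atTop (𝓝 z) := by
    rw [tendsto_iff_dist_tendsto_zero]
    apply squeeze_zero (fun n => dist_nonneg) (fun n => (hwd n).le)
    exact tendsto_one_div_add_atTop_nhds_zero_nat
  have hr : Tendsto (fun n => dist (f (w n)) (f z) / dist (w n) z) atTop (𝓝 (Df z)) :=
    h z w (fun _ => z) hwne hwt tendsto_const_nhds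
  have h1 : ∀ᶠ n in atTop, |dist (f (w n)) (f z) / dist (w n) z - Df z| < ε := by
    have := Metric.tendsto_atTop.mp hr ε hε
    simpa [Real.dist_eq] using this
  have h2 : ∀ᶠ n in atTop, dist (w n) z < ε := by
    have hz : Tendsto (fun n : ℕ => (1 : ℝ) / (n + 1)) atTop (𝓝 0) :=
      tendsto_one_div_add_atTop_nhds_zero_nat
    filter_upwards [hz.eventually (eventually_lt_nhds hε)] with n hn
    exact (hwd n).trans hn
  obtain ⟨n, hn1, hn2⟩ := (h1.and h2).exists
  exact ⟨w n, hwne n, hn2, hn1⟩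

lemma df_seq_cont {X : Type*} [MetricSpace X]
    (hperf : ∀ x : X, (𝓝[≠] x).NeBot)
    (f : X → X) (Df : X → ℝ) (h : ∀ x : X, IsInfSim f x (Df x))
    (x : ℕ → X) (a : X) (hx : Tendsto x atTop (𝓝 a)) :
    Tendsto (fun n => Df (x n)) atTop (𝓝 (Df a)) := by
  have key : ∀ n : ℕ, ∃ u : X, u ≠ x n ∧ dist u (x n) < 1 / (n + 1) ∧
      |dist (f u) (f (x n)) / dist u (x n) - Df (x n)| < 1 / (n + 1) :=
    fun n => isInfSim_approx hperf f Df h (x n) (1 / (n + 1)) (by positivity)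
  choose u hune hud hur using key
  have hz : Tendsto (fun n : ℕ => (1 : ℝ) / (n + 1)) atTop (𝓝 0) :=
    tendsto_one_div_add_atTop_nhds_zero_nat
  have hut : Tendsto u atTop (𝓝 a) := by
    rw [tendsto_iff_dist_tendsto_zero]
    apply squeeze_zero (fun n => dist_nonneg)
      (fun n => dist_triangle (u n) (x n) a)
    have : Tendsto (fun n => dist (x n) a) atTop (𝓝 0) :=
      tendsto_iff_dist_tendsto_zero.mp hx
    simpa using (Tendsto.add (squeeze_zero (fun n => dist_nonneg) (fun n => (hud n).le) hz) this)
  have hr : Tendsto (fun n => dist (f (u n)) (f (x n)) / dist (u n) (x n)) atTop (𝓝 (Df a)) :=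
    h a u x hune hut hx
  have hdiff : Tendsto (fun n => dist (f (u n)) (f (x n)) / dist (u n) (x n) - Df (x n))
      atTop (𝓝 0) := by
    apply squeeze_zero_norm (fun n => (hur n).le) hz
  have := hr.sub hdiff
  simpa using this

theorem stmt12 {X : Type*} [MetricSpace X] [CompactSpace X]
    (hperf : ∀ x : X, (𝓝[≠] x).NeBot)
    (f : X → X) (Df : X → ℝ)
    (h : ∀ x : X, IsInfSim f x (Df x)) (hpos : ∀ x : X, 0 < Df x) :
    ∀ c : ℝ, 1 < c → ∃ δ > 0, ∀ x y : X, 0 < dist x y → dist x y < δ →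
      c⁻¹ * Df x ≤ dist (f x) (f y) / dist x y ∧
      dist (f x) (f y) / dist x y ≤ c * Df x := by
  intro c hc
  by_contra hcon
  push_neg at hcon
  have key : ∀ n : ℕ, ∃ x y : X, 0 < dist x y ∧ dist x y < 1 / (n + 1) ∧
      (dist (f x) (f y) / dist x y < c⁻¹ * Df x ∨
       c * Df x < dist (f x) (f y) / dist x y) := by
    intro n
    obtain ⟨x, y, hd0, hdδ, hbad⟩ := hcon (1 / (n + 1)) (by positivity)
    refine ⟨x, y, hd0, hdδ, ?_⟩
    by_cases h1 : c⁻¹ * Df x ≤ dist (f x) (f y) / dist x y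
    · exact Or.inr (hbad h1)
    · exact Or.inl (lt_of_not_ge h1)
  choose x y hd0 hdδ hbad using key
  obtain ⟨a, -, φ, hφ, hxa⟩ :=
    IsCompact.tendsto_subseq (isCompact_univ (X := X)) (fun n => Set.mem_univ (x n))
  have hz : Tendsto (fun n : ℕ => (1 : ℝ) / (n + 1)) atTop (𝓝 0) :=
    tendsto_one_div_add_atTop_nhds_zero_nat
  have hzφ : Tendsto (fun n : ℕ => (1 : ℝ) / (φ n + 1)) atTop (𝓝 0) :=
    hz.comp hφ.tendsto_atTop
  have hya : Tendsto (fun n => y (φ n)) atTop (𝓝 a) := by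
    rw [tendsto_iff_dist_tendsto_zero]
    apply squeeze_zero (fun n => dist_nonneg)
      (fun n => dist_triangle (y (φ n)) (x (φ n)) a)
    have hxd : Tendsto (fun n => dist (x (φ n)) a) atTop (𝓝 0) :=
      tendsto_iff_dist_tendsto_zero.mp hxa
    have h1 : Tendsto (fun n => dist (y (φ n)) (x (φ n))) atTop (𝓝 0) := by
      apply squeeze_zero (fun n => dist_nonneg) (fun n => ?_) hzφ
      rw [dist_comm]; exact (hdδ (φ n)).le
    simpa using h1.add hxd
  have hne : ∀ n, x (φ n) ≠ y (φ n) := fun n => by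
    have := hd0 (φ n); exact fun he => by simp [he] at this
  have hr : Tendsto (fun n => dist (f (x (φ n))) (f (y (φ n))) / dist (x (φ n)) (y (φ n)))
      atTop (𝓝 (Df a)) := h a (fun n => x (φ n)) (fun n => y (φ n)) hne hxa hya
  have hDf : Tendsto (fun n => Df (x (φ n))) atTop (𝓝 (Df a)) :=
    df_seq_cont hperf f Df h (fun n => x (φ n)) a hxa
  set ε := Df a * (c - 1) / (2 * (c + 1)) with hεdef
  have hεpos : 0 < ε := by
    have := hpos a
    apply div_pos (by nlinarith) (by nlinarith)
  have e1 : ∀ᶠ n in atTop,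
      |dist (f (x (φ n))) (f (y (φ n))) / dist (x (φ n)) (y (φ n)) - Df a| < ε := by
    have := Metric.tendsto_atTop.mp hr ε hεpos
    simpa [Real.dist_eq] using this
  have e2 : ∀ᶠ n in atTop, |Df (x (φ n)) - Df a| < ε := by
    have := Metric.tendsto_atTop.mp hDf ε hεpos
    simpa [Real.dist_eq] using this
  obtain ⟨n, hn1, hn2⟩ := (e1.and e2).exists
  have hb := hbad (φ n)
  have habs1 := abs_lt.mp hn1
  have habs2 := abs_lt.mp hn2
  have hda := hpos a
  have hc1 : (0:ℝ) < c := by linarith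
  have hmul : 2 * (c + 1) * ε = Df a * (c - 1) := by
    rw [hεdef]; field_simp
  have h2 : (c + 1) * ε < (c - 1) * Df a := by
    have : 0 < Df a * (c - 1) := mul_pos hda (by linarith)
    nlinarith
  rcases hb with hb | hb
  · -- ratio < c⁻¹ * Df (x (φ n))
    have hcinv : c⁻¹ * Df (x (φ n)) ≤ c⁻¹ * (Df a + ε) := by
      apply mul_le_mul_of_nonneg_left (by linarith [habs2.2]) (by positivity)
    have h1 : Df a - ε < c⁻¹ * (Df a + ε) := by
      linarith [habs1.1, hb.trans_le hcinv]
    rw [← div_eq_inv_mul] at h1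
    have h3 := (lt_div_iff₀ hc1).mp h1
    nlinarith
  · -- c * Df (x (φ n)) < ratio
    have h1 : c * (Df a - ε) < Df a + ε := by
      have : c * (Df a - ε) ≤ c * Df (x (φ n)) :=
        mul_le_mul_of_nonneg_left (by linarith [habs2.1]) (by linarith)
      linarith [habs1.2, this.trans_lt hb]
    nlinarith
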